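/- The function I₀ satisfies the modified Bessel differential equation of order zero: for every real x, x·I₀''(x) + I₀'(x) − x·I₀(x) = 0. -/

import Mathlib

open Real MeasureTheory intervalIntegral Metric

noncomputable def J (n : ℕ) (x : ℝ) : ℝ := ∫ θ in (0:ℝ)..π, (Real.cos θ)^n * Real.exp (x * Real.cos θ)

lemma J_cont (n : ℕ) (x : ℝ) : IntervalIntegrable (fun θ => (Real.cos θ)^n * Real.exp (x * Real.cos θ)) volume 0 π := by
  apply Continuous.intervalIntegrable
  continuity

lemma hasDerivAt_J (n : ℕ) (x : ℝ) : HasDerivAt (J n) (J (n+1) x) x := by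
  have := intervalIntegral.hasDerivAt_integral_of_dominated_loc_of_deriv_le
    (F := fun x θ => (Real.cos θ)^n * Real.exp (x * Real.cos θ))
    (F' := fun x θ => (Real.cos θ)^(n+1) * Real.exp (x * Real.cos θ))
    (x₀ := x) (a := (0:ℝ)) (b := π) (μ := volume)
    (bound := fun _ => Real.exp (|x| + 1)) (ball_mem_nhds x one_pos) ?_ (J_cont n x) ?_ ?_ ?_ ?_
  · exact this.2
  · filter_upwards with y
    exact (Continuous.aestronglyMeasurable (by continuity)).restrict
  · exact (Continuous.aestronglyMeasurable (by continuity)).restrict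
  · filter_upwards with θ _ y hy
    have h1 : |Real.cos θ| ≤ 1 := abs_cos_le_one θ
    have h2 : y * Real.cos θ ≤ |x| + 1 := by
      have : |y * Real.cos θ| ≤ |y| * 1 := by
        rw [abs_mul]; exact mul_le_mul_of_nonneg_left h1 (abs_nonneg _)
      have hyx : |y| ≤ |x| + 1 := by
        have := mem_ball_iff_norm.mp hy
        have : |y - x| < 1 := by simpa [Real.norm_eq_abs] using this
        calc |y| = |y - x + x| := by ring_nf
          _ ≤ |y - x| + |x| := abs_add_le _ _
          _ ≤ |x| + 1 := by linarith
      nlinarith [le_abs_self (y * Real.cos θ), abs_nonneg y]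
    rw [Real.norm_eq_abs, abs_mul, abs_exp, abs_pow]
    calc |Real.cos θ|^(n+1) * Real.exp (y * Real.cos θ)
        ≤ 1 * Real.exp (|x| + 1) := by
          apply mul_le_mul (pow_le_one₀ (abs_nonneg _) h1) (Real.exp_le_exp.mpr h2)
            (Real.exp_pos _).le zero_le_one
      _ = Real.exp (|x| + 1) := one_mul _
  · exact intervalIntegrable_const
  · filter_upwards with θ _ y _
    have : HasDerivAt (fun y : ℝ => y * Real.cos θ) (Real.cos θ) y := by
      simpa using (hasDerivAt_id y).mul_const (Real.cos θ)
    have := (this.exp).const_mul ((Real.cos θ)^n)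
    exact this.congr_deriv (by ring)

lemma deriv_J (n : ℕ) : deriv (J n) = J (n+1) := by
  ext x; exact (hasDerivAt_J n x).deriv


/-- The modified Bessel function of the first kind of order zero,
`I₀(x) = (1/π) ∫₀^π exp (x cos θ) dθ`. -/
noncomputable def I0 (x : ℝ) : ℝ := (1 / π) * ∫ θ in (0:ℝ)..π, Real.exp (x * Real.cos θ)
lemma ibp (x : ℝ) :
    ∫ θ in (0:ℝ)..π, (Real.cos θ * Real.exp (x * Real.cos θ)
      - x * (Real.sin θ)^2 * Real.exp (x * Real.cos θ)) = 0 := by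
  have key : ∀ θ ∈ Set.uIcc (0:ℝ) π, HasDerivAt (fun θ => Real.sin θ * Real.exp (x * Real.cos θ))
      (Real.cos θ * Real.exp (x * Real.cos θ) - x * (Real.sin θ)^2 * Real.exp (x * Real.cos θ)) θ := by
    intro θ _
    have h1 : HasDerivAt (fun θ : ℝ => x * Real.cos θ) (x * (-Real.sin θ)) θ :=
      (Real.hasDerivAt_cos θ).const_mul x
    have h2 := (Real.hasDerivAt_sin θ).fun_mul h1.exp
    exact h2.congr_deriv (by ring)
  have := intervalIntegral.integral_eq_sub_of_hasDerivAt key (by apply Continuous.intervalIntegrable; continuity)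
  simpa using this

lemma key_ode (x : ℝ) : x * J 2 x + J 1 x - x * J 0 x = 0 := by
  have h1 : J 1 x = x * ∫ θ in (0:ℝ)..π, (Real.sin θ)^2 * Real.exp (x * Real.cos θ) := by
    have := ibp x
    rw [intervalIntegral.integral_sub (by apply Continuous.intervalIntegrable; continuity)
      (by apply Continuous.intervalIntegrable; continuity), sub_eq_zero] at this
    simp only [J, pow_one]
    rw [this, ← intervalIntegral.integral_const_mul]
    congr 1; ext θ; ring
  have h2 : J 0 x = J 2 x + ∫ θ in (0:ℝ)..π, (Real.sin θ)^2 * Real.exp (x * Real.cos θ) := by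
    simp only [J]
    rw [← intervalIntegral.integral_add (by apply Continuous.intervalIntegrable; continuity)
      (by apply Continuous.intervalIntegrable; continuity)]
    congr 1; ext θ
    have := Real.sin_sq_add_cos_sq θ
    nlinarith [Real.exp_pos (x * Real.cos θ)]
  rw [h1, h2]; ring

/-- `I₀` satisfies the modified Bessel differential equation of order zero:
`x·I₀''(x) + I₀'(x) − x·I₀(x) = 0` for every real `x`. -/
theorem I0_modified_bessel_ode (x : ℝ) :
    x * deriv (deriv I0) x + deriv I0 x - x * I0 x = 0 := by
  have hI : ∀ y, HasDerivAt I0 ((1/π) * J 1 y) y := by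
    intro y
    have h := (hasDerivAt_J 0 y).const_mul (1/π)
    have : I0 = fun y => (1/π) * J 0 y := by
      funext z; simp [I0, J]
    rw [this]; exact h
  have hd1 : deriv I0 = fun y => (1/π) * J 1 y := funext fun y => (hI y).deriv
  have hd2 : deriv (deriv I0) x = (1/π) * J 2 x := by
    rw [hd1]; exact ((hasDerivAt_J 1 x).const_mul (1/π)).deriv
  have hI0 : I0 x = (1/π) * J 0 x := by simp [I0, J]
  rw [hd2, hd1, hI0]
  have := key_ode x
  field_simp
  linarith [mul_eq_zero_of_left this (1/π)]
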